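/- Let λ₁, λ₂, λ₃ be pairwise distinct complex numbers and R ∈ ℂ. Then (F₁,F₂,F₃,G₁,G₂,G₃) ∈ ℂ⁶ satisfies (F_a − λ_a²R)λ_b − (F_b − λ_b²R)λ_a = (G_a + λ_aF_a) − (G_b + λ_bF_b) for all a ≠ b if and only if there exist U,V,W ∈ ℂ such that F_a = Rλ_a² + Uλ_a + V and G_a = −λ_aF_a − Vλ_a + W for all a ∈ {1,2,3}. -/
import Mathlib


/-- the corank-three linear system
`(F_a − λ_a² R) λ_b − (F_b − λ_b² R) λ_a = (G_a + λ_a F_a) − (G_b + λ_b F_b)` for all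
`a ≠ b`, with `λ₁, λ₂, λ₃` pairwise distinct, has solution set exactly
`F_a = R λ_a² + U λ_a + V`, `G_a = −λ_a F_a − V λ_a + W`. -/
theorem stmt2 (lam : Fin 3 → ℂ) (hlam : Function.Injective lam) (R : ℂ)
    (F G : Fin 3 → ℂ) :
    (∀ a b : Fin 3, a ≠ b →
        (F a - (lam a)^2 * R) * lam b - (F b - (lam b)^2 * R) * lam a
          = (G a + lam a * F a) - (G b + lam b * F b)) ↔
      ∃ U V W : ℂ, ∀ a : Fin 3,
        F a = R * (lam a)^2 + U * lam a + V ∧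
        G a = -(lam a) * F a - V * lam a + W := by
  constructor
  · intro h
    have h01 := h 0 1 (by decide)
    have h02 := h 0 2 (by decide)
    have h12 := h 1 2 (by decide)
    have d0 : lam 0 - lam 1 ≠ 0 :=
      sub_ne_zero.mpr (fun e => absurd (hlam e) (by decide))
    obtain ⟨U, hUe⟩ : ∃ U : ℂ,
        U * (lam 0 - lam 1) = (F 0 - (lam 0)^2*R) - (F 1 - (lam 1)^2*R) :=
      ⟨((F 0 - (lam 0)^2*R) - (F 1 - (lam 1)^2*R))/(lam 0 - lam 1), by field_simp⟩
    refine ⟨U, F 0 - (lam 0)^2*R - U * lam 0,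
      G 0 + lam 0 * F 0 + (F 0 - (lam 0)^2*R - U * lam 0) * lam 0, ?_⟩
    have hF0 : F 0 = R*(lam 0)^2 + U*lam 0 + (F 0 - (lam 0)^2*R - U * lam 0) := by ring
    have hF1 : F 1 = R*(lam 1)^2 + U*lam 1 + (F 0 - (lam 0)^2*R - U * lam 0) := by
      linear_combination hUe
    have hF2 : F 2 = R*(lam 2)^2 + U*lam 2 + (F 0 - (lam 0)^2*R - U * lam 0) := by
      have key : (F 2) * (lam 0 - lam 1)
          = (R*(lam 2)^2 + U*lam 2 + (F 0 - (lam 0)^2*R - U * lam 0)) * (lam 0 - lam 1) := by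
        linear_combination h01 - h02 + h12 + (lam 0 - lam 2) * hUe
      exact mul_right_cancel₀ d0 key
    have hG0 : G 0 = -(lam 0) * F 0 - (F 0 - (lam 0)^2*R - U * lam 0) * lam 0
        + (G 0 + lam 0 * F 0 + (F 0 - (lam 0)^2*R - U * lam 0) * lam 0) := by ring
    have hG1 : G 1 = -(lam 1) * F 1 - (F 0 - (lam 0)^2*R - U * lam 0) * lam 1
        + (G 0 + lam 0 * F 0 + (F 0 - (lam 0)^2*R - U * lam 0) * lam 0) := by
      linear_combination h01 - lam 1 * hF0 + lam 0 * hF1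
    have hG2 : G 2 = -(lam 2) * F 2 - (F 0 - (lam 0)^2*R - U * lam 0) * lam 2
        + (G 0 + lam 0 * F 0 + (F 0 - (lam 0)^2*R - U * lam 0) * lam 0) := by
      linear_combination h02 - lam 2 * hF0 + lam 0 * hF2
    intro a
    fin_cases a
    · exact ⟨hF0, hG0⟩
    · exact ⟨hF1, hG1⟩
    · exact ⟨hF2, hG2⟩
  · rintro ⟨U, V, W, hs⟩ a b hab
    obtain ⟨hFa, hGa⟩ := hs a
    obtain ⟨hFb, hGb⟩ := hs b
    rw [hGa, hGb, hFa, hFb]; ring
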